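/- arXiv:2409.19327 — 5 statements merged into one kernel-verified Lean document; each statement's English description precedes it below -/
import Mathlib

section
/- For every t ≥ 0, the function u_t(x,y) = ln(2e^x/(1+t^2+2t e^x cos y + e^{2x})) satisfies the Liouville equation Δu + e^{2u} = 0 on ℝ², and u_t is bounded from above. -/
noncomputable def pdx (f : ℝ × ℝ → ℝ) (p : ℝ × ℝ) : ℝ := fderiv ℝ f p (1, 0)
noncomputable def pdy (f : ℝ × ℝ → ℝ) (p : ℝ × ℝ) : ℝ := fderiv ℝ f p (0, 1)
noncomputable def lap (f : ℝ × ℝ → ℝ) (p : ℝ × ℝ) : ℝ :=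
  pdx (pdx f) p + pdy (pdy f) p

noncomputable def DD (t : ℝ) : ℝ × ℝ → ℝ :=
  fun p => 1 + t ^ 2 + 2 * t * Real.exp p.1 * Real.cos p.2 + Real.exp (2 * p.1)

lemma exp_two_mul' (x : ℝ) : Real.exp (2 * x) = Real.exp x * Real.exp x := by
  rw [two_mul, Real.exp_add]

lemma DD_pos (t : ℝ) (ht : 0 ≤ t) (p : ℝ × ℝ) : 0 < DD t p := by
  have h1 := Real.exp_pos p.1
  have h2 := Real.neg_one_le_cos p.2
  have h3 : Real.exp (2 * p.1) = Real.exp p.1 * Real.exp p.1 := exp_two_mul' p.1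
  unfold DD
  nlinarith [sq_nonneg (Real.exp p.1 - t), mul_nonneg ht h1.le,
    mul_nonneg (mul_nonneg ht h1.le) (by linarith : (0:ℝ) ≤ 1 + Real.cos p.2)]

noncomputable def L1 (t : ℝ) (p : ℝ × ℝ) : ℝ × ℝ →L[ℝ] ℝ :=
  (2 * t * Real.exp p.1 * Real.cos p.2 + 2 * Real.exp (2 * p.1)) • ContinuousLinearMap.fst ℝ ℝ ℝ
  + (-(2 * t * Real.exp p.1 * Real.sin p.2)) • ContinuousLinearMap.snd ℝ ℝ ℝ

noncomputable def L2 (t : ℝ) (p : ℝ × ℝ) : ℝ × ℝ →L[ℝ] ℝ :=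
  (2 * t * Real.exp p.1 * Real.cos p.2 + 4 * Real.exp (2 * p.1)) • ContinuousLinearMap.fst ℝ ℝ ℝ
  + (-(2 * t * Real.exp p.1 * Real.sin p.2)) • ContinuousLinearMap.snd ℝ ℝ ℝ

noncomputable def L3 (t : ℝ) (p : ℝ × ℝ) : ℝ × ℝ →L[ℝ] ℝ :=
  (2 * t * Real.exp p.1 * Real.sin p.2) • ContinuousLinearMap.fst ℝ ℝ ℝ
  + (2 * t * Real.exp p.1 * Real.cos p.2) • ContinuousLinearMap.snd ℝ ℝ ℝ

lemma hasD (t : ℝ) (p : ℝ × ℝ) : HasFDerivAt (DD t) (L1 t p) p := by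
  have he : HasFDerivAt (fun q : ℝ × ℝ => Real.exp q.1)
      (Real.exp p.1 • ContinuousLinearMap.fst ℝ ℝ ℝ) p := hasFDerivAt_fst.exp
  have hc : HasFDerivAt (fun q : ℝ × ℝ => Real.cos q.2)
      ((-Real.sin p.2) • ContinuousLinearMap.snd ℝ ℝ ℝ) p := hasFDerivAt_snd.cos
  have hm := (he.mul hc).const_mul (2 * t)
  have hE2 := (hasFDerivAt_fst.const_mul (2:ℝ)).exp (E := ℝ × ℝ) (x := p)
  have h := ((hasFDerivAt_const (1 + t ^ 2) p).add hm).add hE2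
  have hfun : (DD t) = fun q : ℝ × ℝ =>
      (1 + t ^ 2) + 2 * t * (Real.exp q.1 * Real.cos q.2) + Real.exp (2 * q.1) := by
    funext q; unfold DD; ring
  rw [hfun]
  refine h.congr_fderiv ?_
  apply ContinuousLinearMap.ext
  intro v
  simp [L1, ContinuousLinearMap.smul_apply, ContinuousLinearMap.add_apply]
  ring

lemma hasN1 (t : ℝ) (p : ℝ × ℝ) :
    HasFDerivAt (fun q : ℝ × ℝ =>
      2 * t * Real.exp q.1 * Real.cos q.2 + 2 * Real.exp (2 * q.1)) (L2 t p) p := by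
  have he : HasFDerivAt (fun q : ℝ × ℝ => Real.exp q.1)
      (Real.exp p.1 • ContinuousLinearMap.fst ℝ ℝ ℝ) p := hasFDerivAt_fst.exp
  have hc : HasFDerivAt (fun q : ℝ × ℝ => Real.cos q.2)
      ((-Real.sin p.2) • ContinuousLinearMap.snd ℝ ℝ ℝ) p := hasFDerivAt_snd.cos
  have hm := (he.mul hc).const_mul (2 * t)
  have hE2 := ((hasFDerivAt_fst.const_mul (2:ℝ)).exp (E := ℝ × ℝ) (x := p)).const_mul (2:ℝ)
  have h := hm.add hE2
  have hfun : (fun q : ℝ × ℝ => 2 * t * Real.exp q.1 * Real.cos q.2 + 2 * Real.exp (2 * q.1))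
      = fun q : ℝ × ℝ => 2 * t * (Real.exp q.1 * Real.cos q.2) + 2 * Real.exp (2 * q.1) := by
    funext q; ring
  rw [hfun]
  refine h.congr_fderiv ?_
  apply ContinuousLinearMap.ext
  intro v
  simp [L2, ContinuousLinearMap.smul_apply, ContinuousLinearMap.add_apply]
  ring

lemma hasN2 (t : ℝ) (p : ℝ × ℝ) :
    HasFDerivAt (fun q : ℝ × ℝ => 2 * t * Real.exp q.1 * Real.sin q.2) (L3 t p) p := by
  have he : HasFDerivAt (fun q : ℝ × ℝ => Real.exp q.1)
      (Real.exp p.1 • ContinuousLinearMap.fst ℝ ℝ ℝ) p := hasFDerivAt_fst.exp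
  have hs : HasFDerivAt (fun q : ℝ × ℝ => Real.sin q.2)
      ((Real.cos p.2) • ContinuousLinearMap.snd ℝ ℝ ℝ) p := hasFDerivAt_snd.sin
  have hm := (he.mul hs).const_mul (2 * t)
  have hfun : (fun q : ℝ × ℝ => 2 * t * Real.exp q.1 * Real.sin q.2)
      = fun q : ℝ × ℝ => 2 * t * (Real.exp q.1 * Real.sin q.2) := by
    funext q; ring
  rw [hfun]
  refine hm.congr_fderiv ?_
  apply ContinuousLinearMap.ext
  intro v
  simp [L3, ContinuousLinearMap.smul_apply, ContinuousLinearMap.add_apply]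
  ring

noncomputable def U (t : ℝ) : ℝ × ℝ → ℝ :=
  fun p => Real.log 2 + p.1 - Real.log (DD t p)

lemma hasU (t : ℝ) (ht : 0 ≤ t) (p : ℝ × ℝ) :
    HasFDerivAt (U t)
      ((0 + ContinuousLinearMap.fst ℝ ℝ ℝ) - (DD t p)⁻¹ • L1 t p) p :=
  ((hasFDerivAt_const (Real.log 2) p).add hasFDerivAt_fst).sub
    ((hasD t p).log (DD_pos t ht p).ne')

lemma pdx_U (t : ℝ) (ht : 0 ≤ t) :
    pdx (U t) = fun p =>
      1 - (2 * t * Real.exp p.1 * Real.cos p.2 + 2 * Real.exp (2 * p.1)) / DD t p := by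
  funext p
  unfold pdx
  rw [(hasU t ht p).fderiv]
  simp [L1, div_eq_mul_inv]
  ring

lemma pdy_U (t : ℝ) (ht : 0 ≤ t) :
    pdy (U t) = fun p => (2 * t * Real.exp p.1 * Real.sin p.2) / DD t p := by
  funext p
  unfold pdy
  rw [(hasU t ht p).fderiv]
  simp [L1, div_eq_mul_inv]
  ring

lemma hasInvD (t : ℝ) (ht : 0 ≤ t) (p : ℝ × ℝ) :
    HasFDerivAt (fun q => (DD t q)⁻¹) ((-((DD t p) ^ 2)⁻¹) • L1 t p) p :=
  (hasDerivAt_inv (DD_pos t ht p).ne').comp_hasFDerivAt p (hasD t p)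

lemma pdxx_U (t : ℝ) (ht : 0 ≤ t) (p : ℝ × ℝ) :
    pdx (pdx (U t)) p =
      -(-( (2 * t * Real.exp p.1 * Real.cos p.2 + 2 * Real.exp (2 * p.1)) ^ 2 / (DD t p) ^ 2)
        + (2 * t * Real.exp p.1 * Real.cos p.2 + 4 * Real.exp (2 * p.1)) / DD t p) := by
  rw [pdx_U t ht]
  have hprod := (hasN1 t p).mul (hasInvD t ht p)
  have h := (hasFDerivAt_const (1:ℝ) p).sub hprod
  have hfun : (fun p : ℝ × ℝ =>
      1 - (2 * t * Real.exp p.1 * Real.cos p.2 + 2 * Real.exp (2 * p.1)) / DD t p)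
      = fun q : ℝ × ℝ =>
      1 - (2 * t * Real.exp q.1 * Real.cos q.2 + 2 * Real.exp (2 * q.1)) * (DD t q)⁻¹ := by
    funext q; rw [div_eq_mul_inv]
  rw [hfun]
  unfold pdx
  rw [HasFDerivAt.fderiv (f := fun q : ℝ × ℝ =>
      1 - (2 * t * Real.exp q.1 * Real.cos q.2 + 2 * Real.exp (2 * q.1)) * (DD t q)⁻¹) h]
  have hD := (DD_pos t ht p).ne'
  simp [L1, L2, div_eq_mul_inv]
  ring

lemma pdyy_U (t : ℝ) (ht : 0 ≤ t) (p : ℝ × ℝ) :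
    pdy (pdy (U t)) p =
      (2 * t * Real.exp p.1 * Real.sin p.2) ^ 2 / (DD t p) ^ 2
        + (2 * t * Real.exp p.1 * Real.cos p.2) / DD t p := by
  rw [pdy_U t ht]
  have hprod := (hasN2 t p).mul (hasInvD t ht p)
  have hfun : (fun p : ℝ × ℝ => (2 * t * Real.exp p.1 * Real.sin p.2) / DD t p)
      = fun q : ℝ × ℝ => (2 * t * Real.exp q.1 * Real.sin q.2) * (DD t q)⁻¹ := by
    funext q; rw [div_eq_mul_inv]
  rw [hfun]
  unfold pdy
  rw [HasFDerivAt.fderiv (f := fun q : ℝ × ℝ =>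
      (2 * t * Real.exp q.1 * Real.sin q.2) * (DD t q)⁻¹) hprod]
  have hD := (DD_pos t ht p).ne'
  simp [L1, L3, div_eq_mul_inv]
  ring

theorem stmt1 (t : ℝ) (ht : 0 ≤ t) (u : ℝ × ℝ → ℝ)
    (hu : ∀ p : ℝ × ℝ, u p =
      Real.log (2 * Real.exp p.1 /
        (1 + t ^ 2 + 2 * t * Real.exp p.1 * Real.cos p.2 + Real.exp (2 * p.1)))) :
    (∀ p : ℝ × ℝ, lap u p + Real.exp (2 * u p) = 0) ∧ (∃ M : ℝ, ∀ p : ℝ × ℝ, u p ≤ M) := by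
  have huU : u = U t := by
    funext p
    rw [hu p]
    show Real.log (2 * Real.exp p.1 / DD t p) = U t p
    unfold U
    rw [Real.log_div (by positivity) (DD_pos t ht p).ne', Real.log_mul (by norm_num)
      (Real.exp_pos p.1).ne', Real.log_exp]
  subst huU
  constructor
  · intro p
    have hD := DD_pos t ht p
    have hexpu : Real.exp (2 * U t p) = (2 * Real.exp p.1 / DD t p) ^ 2 := by
      have : U t p = Real.log (2 * Real.exp p.1 / DD t p) := by
        unfold U
        rw [Real.log_div (by positivity) hD.ne', Real.log_mul (by norm_num)
          (Real.exp_pos p.1).ne', Real.log_exp]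
      rw [this, exp_two_mul', Real.exp_log (by positivity), sq]
    unfold lap
    rw [pdxx_U t ht p, pdyy_U t ht p, hexpu]
    have hsc := Real.sin_sq_add_cos_sq p.2
    have hE2 : Real.exp (2 * p.1) = Real.exp p.1 * Real.exp p.1 := exp_two_mul' p.1
    have hDD : DD t p = 1 + t ^ 2 + 2 * t * Real.exp p.1 * Real.cos p.2
        + Real.exp p.1 * Real.exp p.1 := by rw [← hE2]; rfl
    rw [hE2]
    field_simp
    linear_combination (4 * t ^ 2 * (Real.exp p.1) ^ 2) * hsc
      - (4 * (Real.exp p.1) ^ 2) * hDD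
  · refine ⟨Real.log (2 * (1 + t)), fun p => ?_⟩
    have hD := DD_pos t ht p
    have hle : 2 * Real.exp p.1 ≤ 2 * (1 + t) * DD t p := by
      have hE := Real.exp_pos p.1
      have hc1 := Real.neg_one_le_cos p.2
      have hE2 : Real.exp (2 * p.1) = Real.exp p.1 * Real.exp p.1 := exp_two_mul' p.1
      unfold DD
      nlinarith [sq_nonneg (Real.exp p.1 - t - 1), sq_nonneg (Real.exp p.1 - t),
        mul_nonneg ht (sq_nonneg (Real.exp p.1 - t)),
        mul_nonneg (mul_nonneg ht hE.le) (by linarith : (0:ℝ) ≤ 1 + Real.cos p.2),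
        mul_nonneg (mul_nonneg (mul_nonneg ht ht) hE.le) (by linarith : (0:ℝ) ≤ 1 + Real.cos p.2)]
    have hval : U t p = Real.log (2 * Real.exp p.1 / DD t p) := by
      unfold U
      rw [Real.log_div (by positivity) hD.ne', Real.log_mul (by norm_num)
        (Real.exp_pos p.1).ne', Real.log_exp]
    rw [hval]
    have h1 : (0:ℝ) < 2 * Real.exp p.1 / DD t p := by positivity
    apply Real.log_le_log (by positivity)
    rw [div_le_iff₀ hD]
    linarith
end

section
/- Suppose u : ℝ² → ℝ satisfies Δu + e^{2u} = 0 and e^{-u} is a quadratic polynomial v. Then v(x) = (λ/2)|x - x₀|² + 1/(2λ) for some λ > 0 and x₀ ∈ ℝ². -/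
open ContinuousLinearMap in
lemma quadD (a b c d e f : ℝ) (p : ℝ × ℝ) :
    HasFDerivAt (fun q : ℝ × ℝ => a*q.1^2+b*q.1*q.2+c*q.2^2+d*q.1+e*q.2+f)
      ((2*a*p.1+b*p.2+d) • fst ℝ ℝ ℝ + (b*p.1+2*c*p.2+e) • snd ℝ ℝ ℝ) p := by
  have h1 : HasFDerivAt (fun q : ℝ × ℝ => q.1) (fst ℝ ℝ ℝ) p := hasFDerivAt_fst
  have h2 : HasFDerivAt (fun q : ℝ × ℝ => q.2) (snd ℝ ℝ ℝ) p := hasFDerivAt_snd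
  have H := (((((((h1.mul h1).const_mul a).add ((h1.mul h2).const_mul b)).add
      ((h2.mul h2).const_mul c)).add (h1.const_mul d)).add (h2.const_mul e)).add_const f)
  have hfun : (fun q : ℝ × ℝ => a*q.1^2+b*q.1*q.2+c*q.2^2+d*q.1+e*q.2+f)
      = (fun q : ℝ × ℝ => a*(q.1*q.1) + b*(q.1*q.2) + c*(q.2*q.2) + d*q.1 + e*q.2 + f) := by
    funext q; ring
  rw [hfun]
  refine H.congr_fderiv ?_
  ext q <;> simp <;> ring

open ContinuousLinearMap in
lemma affD (A B C : ℝ) (p : ℝ × ℝ) :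
    HasFDerivAt (fun q : ℝ × ℝ => A*q.1+B*q.2+C) (A • fst ℝ ℝ ℝ + B • snd ℝ ℝ ℝ) p := by
  have h1 : HasFDerivAt (fun q : ℝ × ℝ => q.1) (fst ℝ ℝ ℝ) p := hasFDerivAt_fst
  have h2 : HasFDerivAt (fun q : ℝ × ℝ => q.2) (snd ℝ ℝ ℝ) p := hasFDerivAt_snd
  exact ((h1.const_mul A).add (h2.const_mul B)).add_const C

lemma firstd (u : ℝ × ℝ → ℝ) (hreg : ContDiff ℝ 2 u) (w p : ℝ × ℝ) :
    fderiv ℝ (fun r => Real.exp (-u r)) p w = -(Real.exp (-u p) * fderiv ℝ u p w) := by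
  have hud : HasFDerivAt u (fderiv ℝ u p) p :=
    ((hreg.differentiable (by norm_num)) p).hasFDerivAt
  rw [HasFDerivAt.fderiv (f := fun r => Real.exp (-u r)) hud.neg.exp]; simp

lemma secd (u : ℝ × ℝ → ℝ) (hreg : ContDiff ℝ 2 u) (w p : ℝ × ℝ) :
    fderiv ℝ (fun q => fderiv ℝ (fun r => Real.exp (-u r)) q w) p w
      = Real.exp (-u p) * (fderiv ℝ u p w)^2
        - Real.exp (-u p) * fderiv ℝ (fun q => fderiv ℝ u q w) p w := by
  have hud : ∀ q, HasFDerivAt u (fderiv ℝ u q) q := fun q =>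
    ((hreg.differentiable (by norm_num)) q).hasFDerivAt
  have hv : ∀ q : ℝ × ℝ, HasFDerivAt (fun r => Real.exp (-u r))
      (Real.exp (-u q) • (-(fderiv ℝ u q))) q := fun q => ((hud q).neg).exp
  have hfd : ContDiff ℝ 1 (fderiv ℝ u) := hreg.fderiv_right (by norm_num)
  have hw : Differentiable ℝ (fun q => fderiv ℝ u q w) := by
    exact ((ContinuousLinearMap.apply ℝ ℝ w).contDiff.comp hfd).differentiable (by norm_num)
  have h1 : (fun q => fderiv ℝ (fun r => Real.exp (-u r)) q w)
      = fun q => -(Real.exp (-u q) * fderiv ℝ u q w) := by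
    funext q; rw [(hv q).fderiv]; simp
  rw [h1]
  have h2 : HasFDerivAt (fun q => -(Real.exp (-u q) * fderiv ℝ u q w))
      (-(Real.exp (-u p) • (fderiv ℝ (fun q => fderiv ℝ u q w) p)
        + (fderiv ℝ u p w) • (Real.exp (-u p) • (-(fderiv ℝ u p))))) p :=
    ((hv p).mul (hw p).hasFDerivAt).neg
  rw [h2.fderiv]; simp; ring

theorem stmt7 (u : ℝ × ℝ → ℝ) (hreg : ContDiff ℝ 2 u)
    (hu : ∀ p : ℝ × ℝ, lap u p + Real.exp (2 * u p) = 0)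
    (hpoly : ∃ a b c d e f : ℝ, ∀ p : ℝ × ℝ,
      Real.exp (-u p) = a * p.1 ^ 2 + b * p.1 * p.2 + c * p.2 ^ 2 + d * p.1 + e * p.2 + f) :
    ∃ lam : ℝ, 0 < lam ∧ ∃ x₀ : ℝ × ℝ, ∀ p : ℝ × ℝ,
      Real.exp (-u p) = lam / 2 * ((p.1 - x₀.1) ^ 2 + (p.2 - x₀.2) ^ 2) + 1 / (2 * lam) := by
  obtain ⟨a, b, c, d, e, f, hP⟩ := hpoly
  have hVfun : (fun r => Real.exp (-u r))
      = (fun q : ℝ × ℝ => a*q.1^2+b*q.1*q.2+c*q.2^2+d*q.1+e*q.2+f) := by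
    funext q; exact hP q
  -- key polynomial identity
  have key2 : ∀ p : ℝ × ℝ,
      (a*p.1^2+b*p.1*p.2+c*p.2^2+d*p.1+e*p.2+f)*(2*a+2*c)
        = (2*a*p.1+b*p.2+d)^2+(b*p.1+2*c*p.2+e)^2+1 := by
    intro p
    have X : ℝ := 0
    have hxx := secd u hreg (1,0) p
    have hyy := secd u hreg (0,1) p
    rw [hVfun] at hxx hyy
    have hx1 : (fun q => fderiv ℝ (fun q : ℝ × ℝ => a*q.1^2+b*q.1*q.2+c*q.2^2+d*q.1+e*q.2+f) q ((1:ℝ),(0:ℝ)))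
        = fun q : ℝ × ℝ => 2*a*q.1+b*q.2+d := by
      funext q
      rw [(quadD a b c d e f q).fderiv]; simp
    have hy1 : (fun q => fderiv ℝ (fun q : ℝ × ℝ => a*q.1^2+b*q.1*q.2+c*q.2^2+d*q.1+e*q.2+f) q ((0:ℝ),(1:ℝ)))
        = fun q : ℝ × ℝ => b*q.1+2*c*q.2+e := by
      funext q
      rw [(quadD a b c d e f q).fderiv]; simp
    rw [hx1] at hxx
    rw [hy1] at hyy
    have hx2 : fderiv ℝ (fun q : ℝ × ℝ => 2*a*q.1+b*q.2+d) p ((1:ℝ),(0:ℝ)) = 2*a := by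
      rw [(affD (2*a) b d p).fderiv]; simp
    have hy2 : fderiv ℝ (fun q : ℝ × ℝ => b*q.1+2*c*q.2+e) p ((0:ℝ),(1:ℝ)) = 2*c := by
      rw [(affD b (2*c) e p).fderiv]; simp
    rw [hx2] at hxx
    rw [hy2] at hyy
    -- hxx : 2*a = exp(-u p)*X^2 - exp(-u p)*uxx , similarly hyy
    have hlap : lap u p = fderiv ℝ (fun q => fderiv ℝ u q ((1:ℝ),(0:ℝ))) p ((1:ℝ),(0:ℝ))
        + fderiv ℝ (fun q => fderiv ℝ u q ((0:ℝ),(1:ℝ))) p ((0:ℝ),(1:ℝ)) := rfl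
    have hup := hu p
    rw [hlap] at hup
    have e2 : fderiv ℝ (fun q : ℝ × ℝ => a*q.1^2+b*q.1*q.2+c*q.2^2+d*q.1+e*q.2+f) p ((1:ℝ),(0:ℝ))
        = 2*a*p.1+b*p.2+d := by
      rw [(quadD a b c d e f p).fderiv]; simp
    have e3 : fderiv ℝ (fun q : ℝ × ℝ => a*q.1^2+b*q.1*q.2+c*q.2^2+d*q.1+e*q.2+f) p ((0:ℝ),(1:ℝ))
        = b*p.1+2*c*p.2+e := by
      rw [(quadD a b c d e f p).fderiv]; simp
    have e2' := firstd u hreg (1,0) p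
    have e3' := firstd u hreg (0,1) p
    rw [hVfun] at e2' e3'
    rw [e2] at e2'
    rw [e3] at e3'
    have e4 : Real.exp (-u p) * (Real.exp (-u p) * Real.exp (2*u p)) = 1 := by
      rw [← Real.exp_add, ← Real.exp_add,
        show -u p + (-u p + 2 * u p) = (0:ℝ) by ring, Real.exp_zero]
    rw [← hP p, e2', e3']
    set E := Real.exp (-u p) with hE
    set X := fderiv ℝ u p ((1:ℝ),(0:ℝ))
    set Y := fderiv ℝ u p ((0:ℝ),(1:ℝ))
    -- from hup : uxx + uyy = -exp(2up); hxx+hyy : 2a+2c = E*(X^2+Y^2) - E*(uxx+uyy)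
    linear_combination E*hxx + E*hyy - E*E*hup + e4
  -- extract coefficient identities
  have h00 := key2 (0,0)
  have h10 := key2 (1,0)
  have hm10 := key2 (-1,0)
  have h01 := key2 (0,1)
  have h0m1 := key2 (0,-1)
  have h11 := key2 (1,1)
  have h1m1 := key2 (1,-1)
  norm_num at h00 h10 hm10 h01 h0m1 h11 h1m1
  have eA : 2*(a+c)*a = 4*a^2+b^2 := by
    linear_combination (1/2)*h10 + (1/2)*hm10 - h00
  have eC : 2*(a+c)*c = b^2+4*c^2 := by
    linear_combination (1/2)*h01 + (1/2)*h0m1 - h00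
  have eF : 2*(a+c)*f = d^2+e^2+1 := by linear_combination h00
  have eB : 2*(a+c)*b = 4*a*b+4*b*c := by
    linear_combination (1/2)*h11 - (1/2)*h1m1 - (1/2)*h01 + (1/2)*h0m1
  have hT : a + c ≠ 0 := by
    intro h0
    rw [h0] at eF
    nlinarith [sq_nonneg d, sq_nonneg e]
  have hb : b = 0 := by
    have h0 : (a+c)*b = 0 := by linear_combination (-(1/2))*eB
    rcases mul_eq_zero.1 h0 with h' | h'
    · exact absurd h' hT
    · exact h'
  have hac : a = c := by
    have h0 : (a-c)^2 = 0 := by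
      linear_combination (-(1/2))*eA + (-(1/2))*eC + (-b)*hb
    have := pow_eq_zero_iff (n := 2) (by norm_num) |>.mp h0
    linarith
  have ha : a ≠ 0 := fun h0 => hT (by rw [h0, ← hac, h0]; ring)
  -- positivity of a
  set x₀ : ℝ × ℝ := (-d/(2*a), -e/(2*a)) with hx₀
  have hvx₀ : Real.exp (-u x₀) = 1/(4*a) := by
    rw [hP x₀]
    simp only [hx₀]
    rw [hb, ← hac]
    field_simp
    linear_combination (4*a)*eF + (8*a*f)*hac
  have hapos : 0 < a := by
    by_contra h
    push_neg at h
    have := Real.exp_pos (-u x₀)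
    rw [hvx₀] at this
    have : (0:ℝ) < 1/(4*a) := this
    have h4 : 0 < 4*a := by
      have := one_div_pos.mp this
      linarith
    linarith
  refine ⟨2*a, by linarith, x₀, fun p => ?_⟩
  rw [hP p, hb, ← hac]
  simp only [hx₀]
  have h4a : (4*a) ≠ 0 := by positivity
  field_simp
  linear_combination eF + (2*f)*hac
end

section
/- Let v(x₁,x₂) = c₁e^{x₁} + c₂e^{-x₁} + c₃ sin x₂ + c₄ cos x₂ with v > 0 everywhere, and suppose u = -ln v satisfies Δu + e^{2u} = 0 on ℝ². Then 4c₁c₂ = 1 + c₃² + c₄². -/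
set_option maxHeartbeats 2000000 in
theorem stmt8 (c₁ c₂ c₃ c₄ : ℝ) (v u : ℝ × ℝ → ℝ)
    (hv : ∀ p : ℝ × ℝ,
      v p = c₁ * Real.exp p.1 + c₂ * Real.exp (-p.1) + c₃ * Real.sin p.2 + c₄ * Real.cos p.2)
    (hpos : ∀ p : ℝ × ℝ, 0 < v p)
    (hu : ∀ p : ℝ × ℝ, u p = -Real.log (v p))
    (heq : ∀ p : ℝ × ℝ, lap u p + Real.exp (2 * u p) = 0) :
    4 * c₁ * c₂ = 1 + c₃ ^ 2 + c₄ ^ 2 := by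
  have hueq : u = fun p => -Real.log (v p) := funext hu
  subst hueq
  have hveq : v = fun p : ℝ × ℝ =>
      c₁ * Real.exp p.1 + c₂ * Real.exp (-p.1) + c₃ * Real.sin p.2 + c₄ * Real.cos p.2 :=
    funext hv
  subst hveq
  set F : ℝ × ℝ → ℝ := fun p : ℝ × ℝ =>
      c₁ * Real.exp p.1 + c₂ * Real.exp (-p.1) + c₃ * Real.sin p.2 + c₄ * Real.cos p.2 with hF
  -- derivative of F
  have h1 : ∀ p : ℝ × ℝ, HasFDerivAt (fun p : ℝ × ℝ => Real.exp p.1)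
      (Real.exp p.1 • ContinuousLinearMap.fst ℝ ℝ ℝ) p := fun p =>
    (Real.hasDerivAt_exp p.1).comp_hasFDerivAt p hasFDerivAt_fst
  have h2 : ∀ p : ℝ × ℝ, HasFDerivAt (fun p : ℝ × ℝ => Real.exp (-p.1))
      (Real.exp (-p.1) • (-ContinuousLinearMap.fst ℝ ℝ ℝ)) p := fun p =>
    by
      have hn : HasFDerivAt (fun p : ℝ × ℝ => -p.1) (-ContinuousLinearMap.fst ℝ ℝ ℝ) p := hasFDerivAt_fst.neg
      exact (Real.hasDerivAt_exp (-p.1)).comp_hasFDerivAt p hn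
  have h3 : ∀ p : ℝ × ℝ, HasFDerivAt (fun p : ℝ × ℝ => Real.sin p.2)
      (Real.cos p.2 • ContinuousLinearMap.snd ℝ ℝ ℝ) p := fun p =>
    (Real.hasDerivAt_sin p.2).comp_hasFDerivAt p hasFDerivAt_snd
  have h4 : ∀ p : ℝ × ℝ, HasFDerivAt (fun p : ℝ × ℝ => Real.cos p.2)
      ((-Real.sin p.2) • ContinuousLinearMap.snd ℝ ℝ ℝ) p := fun p =>
    (Real.hasDerivAt_cos p.2).comp_hasFDerivAt p hasFDerivAt_snd
  set D : ℝ × ℝ → (ℝ × ℝ →L[ℝ] ℝ) := fun p =>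
    (c₁ * Real.exp p.1 - c₂ * Real.exp (-p.1)) • ContinuousLinearMap.fst ℝ ℝ ℝ +
      (c₃ * Real.cos p.2 - c₄ * Real.sin p.2) • ContinuousLinearMap.snd ℝ ℝ ℝ with hD
  have hdv : ∀ p : ℝ × ℝ, HasFDerivAt F (D p) p := by
    intro p
    have := ((((h1 p).const_mul c₁).add ((h2 p).const_mul c₂)).add
      ((h3 p).const_mul c₃)).add ((h4 p).const_mul c₄)
    refine this.congr_fderiv ?_
    apply ContinuousLinearMap.ext
    intro x
    simp [hD, ContinuousLinearMap.smul_apply, smul_eq_mul]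
    ring
  have hFpos : ∀ p : ℝ × ℝ, 0 < F p := hpos
  have hdu : ∀ p : ℝ × ℝ, HasFDerivAt (fun p => -Real.log (F p)) (-((F p)⁻¹ • D p)) p := by
    intro p
    exact ((Real.hasDerivAt_log (hFpos p).ne').comp_hasFDerivAt p (hdv p)).neg
  -- first partials as functions
  have hpdxu : pdx (fun p => -Real.log (F p)) =
      fun p : ℝ × ℝ => -((c₁ * Real.exp p.1 - c₂ * Real.exp (-p.1)) * (F p)⁻¹) := by
    funext p
    unfold pdx
    rw [(hdu p).fderiv]
    simp [hD]
    ring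
  have hpdyu : pdy (fun p => -Real.log (F p)) =
      fun p : ℝ × ℝ => -((c₃ * Real.cos p.2 - c₄ * Real.sin p.2) * (F p)⁻¹) := by
    funext p
    unfold pdy
    rw [(hdu p).fderiv]
    simp [hD]
    ring
  set p0 : ℝ × ℝ := (0, 0) with hp0
  set V : ℝ := c₁ + c₂ + c₄ with hV
  have hFp0 : F p0 = V := by simp [hF, hp0, hV]
  have hVpos : 0 < V := hFp0 ▸ hFpos p0
  -- second derivatives at p0
  have hinv : HasFDerivAt (fun p : ℝ × ℝ => (F p)⁻¹) ((-(F p0 ^ 2)⁻¹) • D p0) p0 :=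
    (hasDerivAt_inv (hFpos p0).ne').comp_hasFDerivAt p0 (hdv p0)
  have hN1 : HasFDerivAt (fun p : ℝ × ℝ => c₁ * Real.exp p.1 - c₂ * Real.exp (-p.1))
      ((c₁ • (Real.exp (p0.1) • ContinuousLinearMap.fst ℝ ℝ ℝ)) -
        (c₂ • (Real.exp (-p0.1) • (-ContinuousLinearMap.fst ℝ ℝ ℝ)))) p0 :=
    ((h1 p0).const_mul c₁).sub ((h2 p0).const_mul c₂)
  have hN2 : HasFDerivAt (fun p : ℝ × ℝ => c₃ * Real.cos p.2 - c₄ * Real.sin p.2)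
      ((c₃ • ((-Real.sin p0.2) • ContinuousLinearMap.snd ℝ ℝ ℝ)) -
        (c₄ • (Real.cos (p0.2) • ContinuousLinearMap.snd ℝ ℝ ℝ))) p0 :=
    ((h4 p0).const_mul c₃).sub ((h3 p0).const_mul c₄)
  have hg1 : HasFDerivAt (fun p : ℝ × ℝ => -((c₁ * Real.exp p.1 - c₂ * Real.exp (-p.1)) * (F p)⁻¹))
      (-((c₁ * Real.exp p0.1 - c₂ * Real.exp (-p0.1)) • ((-(F p0 ^ 2)⁻¹) • D p0) +
        (F p0)⁻¹ • ((c₁ • (Real.exp (p0.1) • ContinuousLinearMap.fst ℝ ℝ ℝ)) -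
          (c₂ • (Real.exp (-p0.1) • (-ContinuousLinearMap.fst ℝ ℝ ℝ)))))) p0 :=
    (hN1.mul hinv).neg
  have hg2 : HasFDerivAt (fun p : ℝ × ℝ => -((c₃ * Real.cos p.2 - c₄ * Real.sin p.2) * (F p)⁻¹))
      (-((c₃ * Real.cos p0.2 - c₄ * Real.sin p0.2) • ((-(F p0 ^ 2)⁻¹) • D p0) +
        (F p0)⁻¹ • ((c₃ • ((-Real.sin p0.2) • ContinuousLinearMap.snd ℝ ℝ ℝ)) -
          (c₄ • (Real.cos (p0.2) • ContinuousLinearMap.snd ℝ ℝ ℝ))))) p0 :=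
    (hN2.mul hinv).neg
  have E := heq p0
  unfold lap at E
  rw [hpdxu, hpdyu] at E
  unfold pdx pdy at E
  rw [hg1.fderiv, hg2.fderiv] at E
  simp only [hD, hp0] at E
  have hF0 : F (0 : ℝ × ℝ) = V := by
    simp [hF, hV]
  simp [Prod.fst_zero, Prod.snd_zero, hF0, hFp0, Real.exp_zero, Real.sin_zero, Real.cos_zero,
    two_mul, Real.exp_add, Real.exp_neg, Real.exp_log hVpos] at E
  have hF00 : F (0, 0) = V := hFp0
  rw [hF00, Real.exp_log hVpos] at E
  have hV2 : V ≠ 0 := hVpos.ne'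
  field_simp at E
  have key : (-c₂ - c₁) * V + (c₁ - c₂) ^ 2 + c₄ * V + c₃ ^ 2 + 1 = 0 := by
    apply mul_left_cancel₀ (pow_ne_zero 7 hV2)
    rw [mul_zero]
    linear_combination V ^ 7 * E
  rw [hV] at key
  linear_combination -key
end

section
/- For every κ ∈ ℝ and t ≥ 0, the function u(x₁,x₂) = ln( 2e^{x₂} / ( (√(κ²+t²+1) − κ) + 2t cos(x₁) e^{x₂} + (√(κ²+t²+1) + κ) e^{2x₂} ) ) satisfies Δu + e^{2u} = 0 in the upper half plane ℝ²₊ and the boundary condition ∂u/∂x₂(x₁, 0) = −κ e^{u(x₁,0)} on x₂ = 0. -/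
set_option maxHeartbeats 1000000

noncomputable def DD18 (a b c : ℝ) (q : ℝ × ℝ) : ℝ :=
  a + b * Real.cos q.1 * Real.exp q.2 + c * Real.exp (2 * q.2)

lemma DD18_pos {a b c : ℝ} (ha : 0 < a) (hc : 0 < c) (hb : 0 ≤ b)
    (habc : 4 * (a * c) = b ^ 2 + 4) (q : ℝ × ℝ) : 0 < DD18 a b c q := by
  have hE2 : Real.exp (2 * q.2) = Real.exp q.2 ^ 2 := by rw [two_mul, Real.exp_add, sq]
  have h1 : 0 ≤ 4 * a * b * Real.exp q.2 := by positivity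
  have h2 : 0 ≤ Real.cos q.1 + 1 := by nlinarith [Real.neg_one_le_cos q.1]
  simp only [DD18, hE2]
  nlinarith [sq_nonneg (2 * a - b * Real.exp q.2), Real.exp_pos q.2, mul_nonneg h1 h2,
    sq_nonneg (Real.exp q.2), mul_pos ha (Real.exp_pos q.2)]

lemma DD18_hasFDerivAt (a b c : ℝ) (p : ℝ × ℝ) :
    HasFDerivAt (fun q => DD18 a b c q)
      ((-(b * Real.sin p.1 * Real.exp p.2)) • ContinuousLinearMap.fst ℝ ℝ ℝ +
        (b * Real.cos p.1 * Real.exp p.2 + 2 * c * Real.exp (2 * p.2)) •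
          ContinuousLinearMap.snd ℝ ℝ ℝ) p := by
  refine HasFDerivAt.congr_fderiv
    (((((((Real.hasDerivAt_cos p.1).comp_hasFDerivAt p (hasFDerivAt_fst (𝕜 := ℝ) (p := p))).const_mul b).mul
    ((Real.hasDerivAt_exp p.2).comp_hasFDerivAt p (hasFDerivAt_snd (𝕜 := ℝ) (p := p)))).const_add a).add
    (((Real.hasDerivAt_exp (2*p.2)).comp_hasFDerivAt (f := fun y : ℝ × ℝ => 2 * y.2) p
      ((hasFDerivAt_snd (𝕜 := ℝ) (p := p)).const_mul 2)).const_mul c))) ?_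
  apply ContinuousLinearMap.ext; intro w
  simp [ContinuousLinearMap.smul_apply, smul_eq_mul]
  ring

lemma aux18 (a b c : ℝ) (ha : 0 < a) (hc : 0 < c) (hb : 0 ≤ b)
    (habc : 4 * (a * c) = b ^ 2 + 4) (v : ℝ × ℝ → ℝ)
    (hv : v = fun q : ℝ × ℝ => Real.log 2 + q.2 - Real.log (DD18 a b c q)) :
    (∀ p : ℝ × ℝ, lap v p + Real.exp (2 * v p) = 0) ∧
    (∀ x₁ : ℝ, pdy v (x₁, 0) = (a - c) / 2 * Real.exp (v (x₁, 0))) := by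
  subst hv
  have hDpos := fun q => DD18_pos ha hc hb habc q
  have hDf := DD18_hasFDerivAt a b c
  -- first derivatives of v
  have hvf : ∀ p : ℝ × ℝ, HasFDerivAt
      (fun q : ℝ × ℝ => Real.log 2 + q.2 - Real.log (DD18 a b c q))
      ((b * Real.sin p.1 * Real.exp p.2 / DD18 a b c p) • ContinuousLinearMap.fst ℝ ℝ ℝ +
        (1 - (b * Real.cos p.1 * Real.exp p.2 + 2 * c * Real.exp (2 * p.2)) / DD18 a b c p) •
          ContinuousLinearMap.snd ℝ ℝ ℝ) p := by
    intro p
    refine HasFDerivAt.congr_fderiv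
      (((hasFDerivAt_snd (𝕜 := ℝ) (p := p)).const_add (Real.log 2)).sub
        ((Real.hasDerivAt_log (hDpos p).ne').comp_hasFDerivAt p (hDf p))) ?_
    apply ContinuousLinearMap.ext; intro w
    simp [ContinuousLinearMap.smul_apply, smul_eq_mul]
    field_simp [(hDpos p).ne']
    ring
  have hpdxv : pdx (fun q : ℝ × ℝ => Real.log 2 + q.2 - Real.log (DD18 a b c q)) =
      fun q : ℝ × ℝ => b * Real.sin q.1 * Real.exp q.2 * (DD18 a b c q)⁻¹ := by
    funext q; rw [pdx, (hvf q).fderiv]; simp [div_eq_mul_inv]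
  have hpdyv : pdy (fun q : ℝ × ℝ => Real.log 2 + q.2 - Real.log (DD18 a b c q)) =
      fun q : ℝ × ℝ => 1 - (b * Real.cos q.1 * Real.exp q.2 + 2 * c * Real.exp (2 * q.2)) *
        (DD18 a b c q)⁻¹ := by
    funext q; rw [pdy, (hvf q).fderiv]; simp [div_eq_mul_inv]
  -- second derivatives
  have hg1f : ∀ p : ℝ × ℝ, HasFDerivAt
      (fun q : ℝ × ℝ => b * Real.sin q.1 * Real.exp q.2 * (DD18 a b c q)⁻¹)
      (((b * Real.cos p.1 * Real.exp p.2 * DD18 a b c p +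
          (b * Real.sin p.1 * Real.exp p.2) ^ 2) / DD18 a b c p ^ 2) •
            ContinuousLinearMap.fst ℝ ℝ ℝ +
        ((b * Real.sin p.1 * Real.exp p.2 * DD18 a b c p - b * Real.sin p.1 * Real.exp p.2 *
          (b * Real.cos p.1 * Real.exp p.2 + 2 * c * Real.exp (2 * p.2))) / DD18 a b c p ^ 2) •
            ContinuousLinearMap.snd ℝ ℝ ℝ) p := by
    intro p
    refine HasFDerivAt.congr_fderiv
      (((((Real.hasDerivAt_sin p.1).comp_hasFDerivAt p (hasFDerivAt_fst (𝕜 := ℝ) (p := p))).const_mul b).mul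
      ((Real.hasDerivAt_exp p.2).comp_hasFDerivAt p (hasFDerivAt_snd (𝕜 := ℝ) (p := p)))).mul
        ((hasDerivAt_inv (hDpos p).ne').comp_hasFDerivAt p (hDf p))) ?_
    apply ContinuousLinearMap.ext; intro w
    simp [ContinuousLinearMap.smul_apply, smul_eq_mul]
    field_simp [(hDpos p).ne']
    ring
  have hg2f : ∀ p : ℝ × ℝ, HasFDerivAt
      (fun q : ℝ × ℝ => 1 - (b * Real.cos q.1 * Real.exp q.2 + 2 * c * Real.exp (2 * q.2)) *
        (DD18 a b c q)⁻¹)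
      ((-((-(b * Real.sin p.1 * Real.exp p.2) * DD18 a b c p -
          (b * Real.cos p.1 * Real.exp p.2 + 2 * c * Real.exp (2 * p.2)) *
            (-(b * Real.sin p.1 * Real.exp p.2))) / DD18 a b c p ^ 2)) •
            ContinuousLinearMap.fst ℝ ℝ ℝ +
        (-(((b * Real.cos p.1 * Real.exp p.2 + 4 * c * Real.exp (2 * p.2)) * DD18 a b c p -
          (b * Real.cos p.1 * Real.exp p.2 + 2 * c * Real.exp (2 * p.2)) *
            (b * Real.cos p.1 * Real.exp p.2 + 2 * c * Real.exp (2 * p.2))) / DD18 a b c p ^ 2)) •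
            ContinuousLinearMap.snd ℝ ℝ ℝ) p := by
    intro p
    have t1 := (((Real.hasDerivAt_cos p.1).comp_hasFDerivAt p (hasFDerivAt_fst (𝕜 := ℝ) (p := p))).const_mul b).mul
      ((Real.hasDerivAt_exp p.2).comp_hasFDerivAt p (hasFDerivAt_snd (𝕜 := ℝ) (p := p)))
    have t2 := ((Real.hasDerivAt_exp (2*p.2)).comp_hasFDerivAt p
        ((hasFDerivAt_snd (𝕜 := ℝ) (p := p)).const_mul 2)).const_mul (2*c)
    have t3 := ((t1.add t2).mul
        ((hasDerivAt_inv (hDpos p).ne').comp_hasFDerivAt p (hDf p))).const_sub 1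
    refine HasFDerivAt.congr_fderiv t3 ?_
    apply ContinuousLinearMap.ext; intro w
    simp [ContinuousLinearMap.smul_apply, smul_eq_mul]
    field_simp [(hDpos p).ne']
    ring
  -- exponential of v
  have hev : ∀ p : ℝ × ℝ, Real.exp (Real.log 2 + p.2 - Real.log (DD18 a b c p)) =
      2 * Real.exp p.2 / DD18 a b c p := by
    intro p
    rw [Real.exp_sub, Real.exp_add, Real.exp_log two_pos, Real.exp_log (hDpos p)]
  constructor
  · intro p
    have e1 : pdx (fun q : ℝ × ℝ => b * Real.sin q.1 * Real.exp q.2 * (DD18 a b c q)⁻¹) p =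
        (b * Real.cos p.1 * Real.exp p.2 * DD18 a b c p +
          (b * Real.sin p.1 * Real.exp p.2) ^ 2) / DD18 a b c p ^ 2 := by
      rw [pdx, (hg1f p).fderiv]; simp
    have e2 : pdy (fun q : ℝ × ℝ => 1 - (b * Real.cos q.1 * Real.exp q.2 +
        2 * c * Real.exp (2 * q.2)) * (DD18 a b c q)⁻¹) p =
        -(((b * Real.cos p.1 * Real.exp p.2 + 4 * c * Real.exp (2 * p.2)) * DD18 a b c p -
          (b * Real.cos p.1 * Real.exp p.2 + 2 * c * Real.exp (2 * p.2)) *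
            (b * Real.cos p.1 * Real.exp p.2 + 2 * c * Real.exp (2 * p.2))) / DD18 a b c p ^ 2) := by
      rw [pdy, (hg2f p).fderiv]; simp
    have e3 : Real.exp (2 * (Real.log 2 + p.2 - Real.log (DD18 a b c p))) =
        (2 * Real.exp p.2 / DD18 a b c p) ^ 2 := by
      rw [two_mul, Real.exp_add, hev p, sq]
    simp only [lap, hpdxv, hpdyv, e1, e2, e3]
    have hE2 : Real.exp (2 * p.2) = Real.exp p.2 ^ 2 := by rw [two_mul, Real.exp_add, sq]
    have hsc : Real.sin p.1 ^ 2 + Real.cos p.1 ^ 2 = 1 := Real.sin_sq_add_cos_sq p.1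
    have hDq : DD18 a b c p = a + b * Real.cos p.1 * Real.exp p.2 + c * Real.exp p.2 ^ 2 := by
      simp [DD18, hE2]
    rw [hDq, hE2]
    field_simp [show a + b * Real.cos p.1 * Real.exp p.2 + c * Real.exp p.2 ^ 2 ≠ 0 by
      rw [← hDq]; exact (hDpos p).ne']
    refine div_eq_zero_iff.mpr (Or.inl ?_)
    linear_combination (Real.exp p.2)^2 * b^2 * hsc - (Real.exp p.2)^2 * habc
  · intro x₁
    have h0 : DD18 a b c (x₁, (0:ℝ)) = a + b * Real.cos x₁ + c := by
      simp [DD18]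
    have hne : a + b * Real.cos x₁ + c ≠ 0 := by rw [← h0]; exact (hDpos _).ne'
    have hpos : 0 < a + b * Real.cos x₁ + c := by rw [← h0]; exact hDpos _
    rw [hpdyv]
    simp only [h0, mul_zero, Real.exp_zero, add_zero, mul_one]
    rw [Real.exp_sub, Real.exp_log two_pos, Real.exp_log hpos]
    field_simp
    ring

theorem stmt18 (κ t : ℝ) (ht : 0 ≤ t) (u : ℝ × ℝ → ℝ)
    (hu : ∀ p : ℝ × ℝ, u p =
      Real.log (2 * Real.exp p.2 /
        ((Real.sqrt (κ ^ 2 + t ^ 2 + 1) - κ) + 2 * t * Real.cos p.1 * Real.exp p.2 +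
          (Real.sqrt (κ ^ 2 + t ^ 2 + 1) + κ) * Real.exp (2 * p.2)))) :
    (∀ p : ℝ × ℝ, 0 < p.2 → lap u p + Real.exp (2 * u p) = 0) ∧
    (∀ x₁ : ℝ, pdy u (x₁, 0) = -κ * Real.exp (u (x₁, 0))) := by
  set s := Real.sqrt (κ ^ 2 + t ^ 2 + 1) with hsdef
  have hs2 : s ^ 2 = κ ^ 2 + t ^ 2 + 1 := Real.sq_sqrt (by positivity)
  have hs0 : 0 ≤ s := Real.sqrt_nonneg _
  have ha : 0 < s - κ := by nlinarith [sq_nonneg (s + κ), sq_nonneg (s - κ), sq_nonneg t]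
  have hc : 0 < s + κ := by nlinarith [sq_nonneg (s + κ), sq_nonneg (s - κ), sq_nonneg t]
  have hb : (0:ℝ) ≤ 2 * t := by linarith
  have habc : 4 * ((s - κ) * (s + κ)) = (2 * t) ^ 2 + 4 := by nlinarith [hs2]
  have hveq : u = fun q : ℝ × ℝ => Real.log 2 + q.2 -
      Real.log (DD18 (s - κ) (2 * t) (s + κ) q) := by
    funext q
    have hD : DD18 (s - κ) (2 * t) (s + κ) q =
        (s - κ) + 2 * t * Real.cos q.1 * Real.exp q.2 + (s + κ) * Real.exp (2 * q.2) := rfl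
    have hDpos : 0 < DD18 (s - κ) (2 * t) (s + κ) q := DD18_pos ha hc hb habc q
    rw [hu q, ← hD, Real.log_div (by positivity) hDpos.ne', Real.log_mul two_ne_zero
      (Real.exp_ne_zero _), Real.log_exp]
  obtain ⟨h1, h2⟩ := aux18 (s - κ) (2 * t) (s + κ) ha hc hb habc u hveq
  refine ⟨fun p _ => h1 p, fun x₁ => ?_⟩
  rw [h2 x₁]
  have : (s - κ - (s + κ)) / 2 = -κ := by ring
  rw [this]
end

section
/- Let u : ℝ²₊ → ℝ be C² up to the boundary, satisfying Δu + e^{2u} = 0 in the open upper half plane and ∂u/∂x₂(x₁,0) = −κ e^{u(x₁,0)} on the boundary for a constant κ ∈ ℝ. Then the holomorphic function P = u_{zz} − u_z² is real-valued on the real axis, i.e. Im(u_{zz} − u_z²)(x₁, 0) = (1/2)(u_{x₁}u_{x₂} − u_{x₁x₂})(x₁,0) = 0 for all x₁ ∈ ℝ. -/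
lemma key_deriv (f : ℝ × ℝ → ℝ) (hf : Differentiable ℝ f) (x : ℝ) :
    HasDerivAt (fun t : ℝ => f (t, 0)) (pdx f (x, 0)) x := by
  have hι : HasDerivAt (fun t : ℝ => ((t, 0) : ℝ × ℝ)) ((1 : ℝ), (0 : ℝ)) x :=
    (hasDerivAt_id x).prodMk (hasDerivAt_const x 0)
  have := (hf (x, 0)).hasFDerivAt.comp_hasDerivAt x hι
  exact this

theorem stmt19 (κ : ℝ) (u : ℝ × ℝ → ℝ) (hreg : ContDiff ℝ 3 u)
    (heq : ∀ p : ℝ × ℝ, 0 < p.2 → lap u p + Real.exp (2 * u p) = 0)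
    (hbd : ∀ x₁ : ℝ, pdy u (x₁, 0) = -κ * Real.exp (u (x₁, 0))) :
    ∀ x₁ : ℝ,
      pdx (pdy u) (x₁, 0) = pdx u (x₁, 0) * pdy u (x₁, 0) ∧
      (1 / 2) * (pdx u (x₁, 0) * pdy u (x₁, 0) - pdx (pdy u) (x₁, 0)) = 0 := by
  intro x₁
  have hu1 : Differentiable ℝ u := hreg.differentiable (by norm_num)
  have hpdy_cd : ContDiff ℝ 2 (pdy u) := by
    have : ContDiff ℝ 2 (fun p => fderiv ℝ u p) := hreg.fderiv_right (by norm_num)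
    exact this.clm_apply contDiff_const
  have hpdy_diff : Differentiable ℝ (pdy u) := hpdy_cd.differentiable (by norm_num)
  -- derivative of LHS of hbd
  have hL : HasDerivAt (fun t : ℝ => pdy u (t, 0)) (pdx (pdy u) (x₁, 0)) x₁ :=
    key_deriv (pdy u) hpdy_diff x₁
  -- derivative of RHS
  have hU : HasDerivAt (fun t : ℝ => u (t, 0)) (pdx u (x₁, 0)) x₁ :=
    key_deriv u hu1 x₁
  have hR : HasDerivAt (fun t : ℝ => -κ * Real.exp (u (t, 0)))
      (-κ * (Real.exp (u (x₁, 0)) * pdx u (x₁, 0))) x₁ :=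
    ((Real.hasDerivAt_exp (u (x₁, 0))).comp x₁ hU).const_mul (-κ)
  have hfun : (fun t : ℝ => pdy u (t, 0)) = fun t : ℝ => -κ * Real.exp (u (t, 0)) := by
    funext t; exact hbd t
  rw [hfun] at hL
  have heqd : pdx (pdy u) (x₁, 0) = -κ * (Real.exp (u (x₁, 0)) * pdx u (x₁, 0)) :=
    hL.unique hR
  have h1 : pdx (pdy u) (x₁, 0) = pdx u (x₁, 0) * pdy u (x₁, 0) := by
    rw [heqd, hbd x₁]; ring
  exact ⟨h1, by rw [h1]; ring⟩
end
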